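/- Let Z ∈ ℝ₊^m be multivariate regularly varying with index α and i.i.d. components, and let A ∈ ℝ₊^{d×m} have all column ℓ1-norms positive. Then for X = AZ, the conditional law of X/‖X‖₁ given ‖X‖₁ > τ converges weakly as τ → ∞ to K_A = Σᵢ (‖A_{·i}‖₁^α / Σⱼ ‖A_{·j}‖₁^α) δ_{A_{·i}/‖A_{·i}‖₁}. -/

import Mathlib

set_option maxHeartbeats 1000000


open MeasureTheory Filter Topology Real
open scoped ENNReal

/-- The conditional law of `X/‖X‖₁` given `‖X‖₁ > τ` for a random vector with
law `ν` on `Fin d → ℝ`. -/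
noncomputable def condAngularL1 (d : ℕ) (ν : Measure (Fin d → ℝ)) (τ : ℝ) :
    Measure (Fin d → ℝ) :=
  ((ν {x | τ < ∑ j, |x j|})⁻¹ • ν.restrict {x | τ < ∑ j, |x j|}).map
    fun x => (∑ j, |x j|)⁻¹ • x

namespace SpecAux
open Set
variable {d m : ℕ} (ρ : Measure ℝ) [IsProbabilityMeasure ρ]

lemma prod_ite_eq_pow {M : Type*} [CommMonoid M] (i : Fin m) (a b : M) :
    ∏ k, (if k = i then a else b) = a * b ^ (m - 1) := by
  rw [← Finset.mul_prod_erase Finset.univ _ (Finset.mem_univ i), if_pos rfl]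
  congr 1
  rw [Finset.prod_congr rfl (fun k hk => if_neg (Finset.ne_of_mem_erase hk)),
    Finset.prod_const, Finset.card_erase_of_mem (Finset.mem_univ i), Finset.card_univ,
    Fintype.card_fin]

lemma cylMeasure (s : Fin m → Set ℝ) :
    Measure.pi (fun _ : Fin m => ρ) {z | ∀ k, z k ∈ s k} = ∏ k, ρ (s k) := by
  have : {z : Fin m → ℝ | ∀ k, z k ∈ s k} = Set.pi Set.univ s := by
    ext z; simp [Set.mem_pi]
  rw [this, Measure.pi_pi]

lemma oneCoord (i : Fin m) (s : Set ℝ) :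
    Measure.pi (fun _ : Fin m => ρ) {z | z i ∈ s} = ρ s := by
  have h : {z : Fin m → ℝ | z i ∈ s} = {z | ∀ k, z k ∈ if k = i then s else Set.univ} := by
    ext z
    constructor
    · intro hz k
      by_cases hk : k = i
      · subst hk; simpa using hz
      · simp [hk]
    · intro hz; have := hz i; simpa using this
  rw [h, cylMeasure]
  have : ∀ k : Fin m, ρ (if k = i then s else Set.univ) = if k = i then ρ s else 1 := by
    intro k; split <;> simp
  simp_rw [this]
  rw [prod_ite_eq_pow]; simp

lemma twoCoord (i k : Fin m) (hik : i ≠ k) (a : ℝ) :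
    Measure.pi (fun _ : Fin m => ρ) {z | a < z i ∧ a < z k} = ρ (Ioi a) * ρ (Ioi a) := by
  have h : {z : Fin m → ℝ | a < z i ∧ a < z k}
      = {z | ∀ l, z l ∈ if l = i then Ioi a else if l = k then Ioi a else Set.univ} := by
    ext z
    constructor
    · rintro ⟨h1, h2⟩ l
      by_cases hl : l = i
      · subst hl; simpa using h1
      · by_cases hl' : l = k
        · subst hl'; simp [hl, h2]
        · simp [hl, hl']
    · intro hz
      constructor
      · have := hz i; simpa using this
      · have := hz k; simpa [hik.symm] using this
  rw [h, cylMeasure]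
  rw [← Finset.mul_prod_erase Finset.univ _ (Finset.mem_univ i), if_pos rfl]
  have hk' : k ∈ Finset.univ.erase i := Finset.mem_erase.2 ⟨fun h' => hik h'.symm, Finset.mem_univ k⟩
  rw [← Finset.mul_prod_erase _ _ hk', if_neg (fun h' => hik h'.symm), if_pos rfl]
  rw [Finset.prod_eq_one, mul_one]
  intro l hl
  have hl1 : l ≠ k := Finset.ne_of_mem_erase hl
  have hl2 : l ≠ i := Finset.ne_of_mem_erase (Finset.mem_of_mem_erase hl)
  rw [if_neg hl2, if_neg hl1]
  simp

lemma colMeasure (i : Fin m) (s t : Set ℝ) :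
    Measure.pi (fun _ : Fin m => ρ) {z | ∀ k, z k ∈ if k = i then s else t}
      = ρ s * ρ t ^ (m - 1) := by
  rw [cylMeasure]
  have : ∀ k : Fin m, ρ (if k = i then s else t) = if k = i then ρ s else ρ t := by
    intro k; split <;> rfl
  simp_rw [this]
  exact prod_ite_eq_pow i _ _

lemma orthant_ae (hρ0 : ρ (Set.Iio 0) = 0) :
    Measure.pi (fun _ : Fin m => ρ) {z | ¬ ∀ k, 0 ≤ z k} = 0 := by
  have h1 : ρ (Set.Ici 0) = 1 := by
    have := measure_compl (measurableSet_Iio (a := (0:ℝ))) (measure_ne_top ρ _)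
    rw [compl_Iio] at this
    rw [this, hρ0, measure_univ]; simp
  have h2 : Measure.pi (fun _ : Fin m => ρ) {z | ∀ k, 0 ≤ z k} = 1 := by
    have : {z : Fin m → ℝ | ∀ k, 0 ≤ z k} = {z | ∀ k, z k ∈ Set.Ici 0} := rfl
    rw [this, cylMeasure]
    simp only [h1]
    simp
  have hms : MeasurableSet {z : Fin m → ℝ | ∀ k, 0 ≤ z k} := by
    have : {z : Fin m → ℝ | ∀ k, 0 ≤ z k} = Set.pi Set.univ (fun _ => Set.Ici 0) := by
      ext z; simp [Set.mem_pi, Set.mem_Ici, Pi.le_def]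
    rw [this]
    exact MeasurableSet.univ_pi (fun _ => measurableSet_Ici)
  have hcompl := measure_compl hms (measure_ne_top (Measure.pi fun _ : Fin m => ρ) _)
  rw [h2, measure_univ] at hcompl
  have hc : {z : Fin m → ℝ | ¬ ∀ k, 0 ≤ z k} = {z : Fin m → ℝ | ∀ k, 0 ≤ z k}ᶜ := by
    ext z; simp
  rw [hc, hcompl]; simp


lemma tail_tendsto_zero : Tendsto (fun x : ℝ => (ρ (Ioi x)).toReal) atTop (𝓝 0) := by
  have h : Tendsto (fun x : ℝ => ρ (Ioi x)) atTop (𝓝 (ρ (⋂ x : ℝ, Ioi x))) :=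
    tendsto_measure_iInter_atTop (fun _ => measurableSet_Ioi.nullMeasurableSet)
      (fun a b hab => Ioi_subset_Ioi hab) ⟨0, measure_ne_top _ _⟩
  have h2 : (⋂ x : ℝ, Ioi x) = (∅ : Set ℝ) := by
    ext y; simp only [mem_iInter, mem_Ioi, mem_empty_iff_false, iff_false, not_forall, not_lt]
    exact ⟨y, le_refl y⟩
  rw [h2, measure_empty] at h
  exact (ENNReal.tendsto_toReal (by simp)).comp h

lemma tail_pos (α : ℝ)
    (hRV : ∀ t : ℝ, 0 < t →
      Tendsto (fun x : ℝ => (ρ (Set.Ioi (t * x))).toReal / (ρ (Set.Ioi x)).toReal)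
        atTop (𝓝 (t ^ (-α)))) (x : ℝ) : 0 < (ρ (Ioi x)).toReal := by
  by_contra h
  push_neg at h
  have hx0 : ρ (Ioi x) = 0 := by
    have h0 : (ρ (Ioi x)).toReal = 0 := le_antisymm h ENNReal.toReal_nonneg
    exact ((ENNReal.toReal_eq_zero_iff _).1 h0).resolve_right (measure_ne_top _ _)
  have hz : (fun y : ℝ => (ρ (Set.Ioi ((1:ℝ) * y))).toReal / (ρ (Set.Ioi y)).toReal)
      =ᶠ[atTop] (fun _ => (0:ℝ)) := by
    filter_upwards [eventually_ge_atTop x] with y hy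
    have : ρ (Ioi y) = 0 := measure_mono_null (Ioi_subset_Ioi hy) hx0
    simp [this]
  have h1 : Tendsto (fun _ : ℝ => (0:ℝ)) atTop (𝓝 ((1:ℝ) ^ (-α))) :=
    (hRV 1 one_pos).congr' hz
  have := tendsto_nhds_unique h1 tendsto_const_nhds
  rw [Real.one_rpow] at this
  exact one_ne_zero this

lemma Icc_toReal (hρ0 : ρ (Set.Iio 0) = 0) (a : ℝ) (ha : 0 ≤ a) :
    (ρ (Icc 0 a)).toReal = 1 - (ρ (Ioi a)).toReal := by
  have hset : Icc 0 a = (Iio 0 ∪ Ioi a)ᶜ := by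
    ext y; simp [mem_Icc, not_or, not_lt]
  have hdis : Disjoint (Iio 0) (Ioi a) := by
    rw [Set.disjoint_left]
    intro y hy hy'
    exact absurd (lt_trans (lt_of_le_of_lt ha hy') hy) (lt_irrefl _)
  have hm : ρ (Iio 0 ∪ Ioi a) = ρ (Ioi a) := by
    rw [measure_union hdis measurableSet_Ioi, hρ0, zero_add]
  rw [hset, measure_compl (measurableSet_Iio.union measurableSet_Ioi) (measure_ne_top _ _),
    hm, measure_univ, ENNReal.toReal_sub_of_le prob_le_one (by simp)]
  simp

lemma Icc_tendsto_one (hρ0 : ρ (Set.Iio 0) = 0) {δ : ℝ} (hδ : 0 < δ) :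
    Tendsto (fun τ : ℝ => (ρ (Icc 0 (δ * τ))).toReal) atTop (𝓝 1) := by
  have hmul : Tendsto (fun τ : ℝ => δ * τ) atTop atTop :=
    Tendsto.const_mul_atTop hδ tendsto_id
  have h1 : Tendsto (fun τ : ℝ => (ρ (Ioi (δ * τ))).toReal) atTop (𝓝 0) :=
    (tail_tendsto_zero ρ).comp hmul
  have h2 : Tendsto (fun τ : ℝ => 1 - (ρ (Ioi (δ * τ))).toReal) atTop (𝓝 (1 - 0)) :=
    tendsto_const_nhds.sub h1
  rw [sub_zero] at h2
  apply h2.congr'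
  filter_upwards [eventually_ge_atTop 0] with τ hτ
  rw [Icc_toReal ρ hρ0 _ (mul_nonneg hδ.le hτ)]


lemma Ioc_toReal (ρ : Measure ℝ) [IsProbabilityMeasure ρ] (a b : ℝ) (hab : a ≤ b) :
    (ρ (Ioc a b)).toReal = (ρ (Ioi a)).toReal - (ρ (Ioi b)).toReal := by
  have h : Ioc a b = Ioi a \ Ioi b := by
    ext x; simp [Set.mem_Ioc, not_lt, and_comm]
  rw [h, measure_diff (Ioi_subset_Ioi hab) measurableSet_Ioi.nullMeasurableSet (measure_ne_top _ _),
    ENNReal.toReal_sub_of_le (measure_mono (Ioi_subset_Ioi hab)) (measure_ne_top _ _)]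


lemma measurable_mulVec (A : Matrix (Fin d) (Fin m) ℝ) : Measurable (A.mulVec) := by
  apply measurable_pi_lambda
  intro j
  have : (fun z : Fin m → ℝ => A.mulVec z j) = fun z => ∑ k, A j k * z k := by
    funext z; simp [Matrix.mulVec, dotProduct]
  rw [this]
  exact Finset.measurable_sum _ (fun k _ => (measurable_pi_apply k).const_mul _)

lemma measurable_normfun : Measurable (fun x : Fin d → ℝ => ∑ j, |x j|) :=
  Finset.measurable_sum _ (fun j _ => (measurable_pi_apply j).abs)

lemma measurable_gfun : Measurable (fun x : Fin d → ℝ => (∑ j, |x j|)⁻¹ • x) :=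
  (measurable_normfun.inv).smul measurable_id

lemma cond_integral_eq (hρ0 : ρ (Set.Iio 0) = 0)
    (A : Matrix (Fin d) (Fin m) ℝ) (hA : ∀ i j, 0 ≤ A i j)
    (f : BoundedContinuousFunction (Fin d → ℝ) ℝ) (τ : ℝ) :
    ∫ x, f x ∂(condAngularL1 d ((Measure.pi fun _ : Fin m => ρ).map A.mulVec) τ)
      = ((Measure.pi fun _ : Fin m => ρ) {z | τ < ∑ i, (∑ j, A j i) * z i}).toReal⁻¹
        * ∫ z in {z : Fin m → ℝ | τ < ∑ i, (∑ j, A j i) * z i},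
            f ((∑ i, (∑ j, A j i) * z i)⁻¹ • A.mulVec z) ∂(Measure.pi fun _ : Fin m => ρ) := by
  set μ := Measure.pi fun _ : Fin m => ρ with hμ
  set ν := μ.map A.mulVec with hν
  set T : Set (Fin d → ℝ) := {x | τ < ∑ j, |x j|} with hT
  have hTmeas : MeasurableSet T := measurable_normfun measurableSet_Ioi
  have hh := measurable_mulVec A
  -- a.e. orthant
  have hae : ∀ᵐ z ∂μ, ∀ k, 0 ≤ z k := by
    rw [ae_iff]
    exact orthant_ae ρ hρ0
  -- key pointwise identity on the orthant
  have hsum : ∀ z : Fin m → ℝ, (∀ k, 0 ≤ z k) →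
      (∑ j, |A.mulVec z j|) = ∑ i, (∑ j, A j i) * z i := by
    intro z hz
    have habs : ∀ j, |A.mulVec z j| = A.mulVec z j := by
      intro j
      rw [abs_of_nonneg]
      simp only [Matrix.mulVec, dotProduct]
      exact Finset.sum_nonneg (fun k _ => mul_nonneg (hA j k) (hz k))
    simp_rw [habs]
    have : ∀ j, A.mulVec z j = ∑ k, A j k * z k := by
      intro j; simp [Matrix.mulVec, dotProduct]
    simp_rw [this]
    rw [Finset.sum_comm]
    congr 1; funext i
    rw [← Finset.sum_mul]
  have hsetae : A.mulVec ⁻¹' T =ᵐ[μ] {z : Fin m → ℝ | τ < ∑ i, (∑ j, A j i) * z i} := by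
    rw [Filter.eventuallyEq_set]
    filter_upwards [hae] with z hz
    simp only [Set.mem_preimage, hT, Set.mem_setOf_eq, hsum z hz]
  -- unfold
  rw [condAngularL1]
  rw [integral_map (measurable_gfun).aemeasurable f.continuous.measurable.aestronglyMeasurable]
  rw [integral_smul_measure]
  rw [ENNReal.toReal_inv, smul_eq_mul]
  congr 1
  · rw [Measure.map_apply hh hTmeas, measure_congr hsetae]
  · have hmap := setIntegral_map (μ := μ) (g := A.mulVec)
        (f := fun x : Fin d → ℝ => f ((∑ j, |x j|)⁻¹ • x)) (s := T) hTmeas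
        (f.continuous.measurable.comp measurable_gfun).aestronglyMeasurable hh.aemeasurable
    rw [hmap]
    rw [setIntegral_congr_set hsetae]
    apply setIntegral_congr_ae (by
      exact measurableSet_lt measurable_const
        (Finset.measurable_sum _ (fun i _ => (measurable_pi_apply i).const_mul _)))
    filter_upwards [hae] with z hz _
    rw [hsum z hz]

lemma theta_close (A : Matrix (Fin d) (Fin m) ℝ) (hA : ∀ i j, 0 ≤ A i j)
    (hcol : ∀ i, 0 < ∑ j, A j i) :
    ∀ δ τ : ℝ, 0 < δ → 0 < τ → ∀ (i : Fin m) (z : Fin m → ℝ),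
      (∀ k, 0 ≤ z k) → (1/(∑ j, A j i))*τ < z i → (∀ k, k ≠ i → z k ≤ δ*τ) →
      dist ((∑ i', (∑ j, A j i') * z i')⁻¹ • A.mulVec z) (fun j => A j i / ∑ j', A j' i)
        ≤ (∑ k, (∑ j, A j k)) * δ := by
  intro δ τ hδ hτ i z hz0 hzi hzk
  have hci : (0:ℝ) < ∑ j, A j i := hcol i
  set S : ℝ := ∑ i', (∑ j, A j i') * z i' with hSdef
  set rr : ℝ := ∑ k ∈ Finset.univ.erase i, (∑ j, A j k) * z k with hrrdef
  have hS_split : S = (∑ j, A j i) * z i + rr := by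
    rw [hSdef, hrrdef]
    exact (Finset.add_sum_erase _ _ (Finset.mem_univ i)).symm
  have hrr_nonneg : 0 ≤ rr := by
    rw [hrrdef]
    exact Finset.sum_nonneg fun k _ => mul_nonneg (hcol k).le (hz0 k)
  have hrr_le : rr ≤ (∑ k, (∑ j, A j k)) * (δ*τ) := by
    rw [hrrdef]
    calc ∑ k ∈ Finset.univ.erase i, (∑ j, A j k) * z k
        ≤ ∑ k ∈ Finset.univ.erase i, (∑ j, A j k) * (δ*τ) :=
          Finset.sum_le_sum fun k hk =>
            mul_le_mul_of_nonneg_left (hzk k (Finset.ne_of_mem_erase hk)) (hcol k).le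
      _ ≤ ∑ k, (∑ j, A j k) * (δ*τ) :=
          Finset.sum_le_sum_of_subset_of_nonneg (Finset.subset_univ _)
            (fun k _ _ => mul_nonneg (hcol k).le (by positivity))
      _ = (∑ k, (∑ j, A j k)) * (δ*τ) := by rw [Finset.sum_mul]
  have hτS : τ < S := by
    have h1 : (∑ j, A j i) * ((1/(∑ j, A j i))*τ) = τ := by
      rw [one_div, ← mul_assoc, mul_inv_cancel₀ hci.ne', one_mul]
    have h2 : (∑ j, A j i) * ((1/(∑ j, A j i))*τ) < (∑ j, A j i) * z i :=
      mul_lt_mul_of_pos_left hzi hci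
    rw [hS_split]
    nlinarith [hrr_nonneg]
  have hSpos : 0 < S := lt_trans hτ hτS
  have hCδ : 0 ≤ (∑ k, (∑ j, A j k)) * δ :=
    mul_nonneg (Finset.sum_nonneg fun k _ => (hcol k).le) hδ.le
  rw [dist_pi_le_iff hCδ]
  intro j
  set Rj : ℝ := ∑ k ∈ Finset.univ.erase i, A j k * z k with hRjdef
  have hX_split : A.mulVec z j = A j i * z i + Rj := by
    have h : A.mulVec z j = ∑ k, A j k * z k := by simp [Matrix.mulVec, dotProduct]
    rw [h, hRjdef]
    exact (Finset.add_sum_erase _ _ (Finset.mem_univ i)).symm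
  have hRj_nonneg : 0 ≤ Rj := by
    rw [hRjdef]
    exact Finset.sum_nonneg fun k _ => mul_nonneg (hA j k) (hz0 k)
  have hRj_le : Rj ≤ rr := by
    rw [hRjdef, hrrdef]
    refine Finset.sum_le_sum fun k _ => mul_le_mul_of_nonneg_right ?_ (hz0 k)
    exact Finset.single_le_sum (f := fun j' => A j' k) (fun j' _ => hA j' k) (Finset.mem_univ j)
  have hAji_le : A j i ≤ ∑ j', A j' i :=
    Finset.single_le_sum (f := fun j' => A j' i) (fun j' _ => hA j' i) (Finset.mem_univ j)
  rw [Real.dist_eq]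
  have happ : ((S⁻¹ • A.mulVec z) j : ℝ) = A.mulVec z j / S := by
    simp [Pi.smul_apply, smul_eq_mul, div_eq_inv_mul]
  rw [happ, div_sub_div _ _ hSpos.ne' hci.ne']
  have hnum : A.mulVec z j * (∑ j', A j' i) - S * A j i
      = Rj * (∑ j', A j' i) - rr * A j i := by
    rw [hX_split, hS_split]
    ring
  rw [hnum, abs_div]
  have habs_num : |Rj * (∑ j', A j' i) - rr * A j i| ≤ (∑ j', A j' i) * rr := by
    rw [abs_sub_le_iff]
    constructor
    · nlinarith [hRj_le, hci, hrr_nonneg, mul_nonneg hrr_nonneg (hA j i)]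
    · nlinarith [hAji_le, hrr_nonneg, mul_nonneg hRj_nonneg hci.le]
  have habs_den : |S * (∑ j', A j' i)| = S * (∑ j', A j' i) :=
    abs_of_pos (mul_pos hSpos hci)
  rw [habs_den]
  calc |Rj * (∑ j', A j' i) - rr * A j i| / (S * (∑ j', A j' i))
      ≤ ((∑ j', A j' i) * rr) / (S * (∑ j', A j' i)) :=
        (div_le_div_iff_of_pos_right (mul_pos hSpos hci)).2 habs_num
    _ = rr / S := by
        rw [mul_comm S _, mul_div_mul_left _ _ hci.ne']
    _ ≤ (∑ k, (∑ j, A j k)) * δ := by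
        rw [div_le_iff₀ hSpos]
        calc rr ≤ (∑ k, (∑ j, A j k)) * (δ*τ) := hrr_le
          _ = ((∑ k, (∑ j, A j k)) * δ) * τ := by ring
          _ ≤ ((∑ k, (∑ j, A j k)) * δ) * S :=
              mul_le_mul_of_nonneg_left (le_of_lt hτS) hCδ

theorem key (α : ℝ) (hα : 0 < α) (ρ : Measure ℝ) [IsProbabilityMeasure ρ]
    (hρ0 : ρ (Set.Iio 0) = 0)
    (hRV : ∀ t : ℝ, 0 < t →
      Tendsto (fun x : ℝ => (ρ (Set.Ioi (t * x))).toReal / (ρ (Set.Ioi x)).toReal)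
        atTop (𝓝 (t ^ (-α))))
    (hm : 0 < m) (c : Fin m → ℝ) (hc : ∀ i, 0 < c i)
    (ω : Fin m → (Fin d → ℝ)) (Θ : (Fin m → ℝ) → (Fin d → ℝ)) (hΘ : Measurable Θ)
    (hΘclose : ∀ δ τ : ℝ, 0 < δ → 0 < τ → ∀ i z, (∀ k, 0 ≤ z k) → ((1/c i)*τ < z i) →
      (∀ k, k ≠ i → z k ≤ δ*τ) → dist (Θ z) (ω i) ≤ (∑ k, c k) * δ)
    (g : BoundedContinuousFunction (Fin d → ℝ) ℝ) :
    Tendsto (fun τ : ℝ =>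
      (∫ z in {z : Fin m → ℝ | τ < ∑ i, c i * z i}, g (Θ z) ∂(Measure.pi fun _ : Fin m => ρ))
        / (ρ (Set.Ioi τ)).toReal)
      atTop (𝓝 (∑ i, c i ^ α * g (ω i))) := by
  have : Nonempty (Fin m) := ⟨⟨0, hm⟩⟩
  set μ := Measure.pi fun _ : Fin m => ρ with hμdef
  set C : ℝ := ∑ k, c k with hCdef
  have hCpos : 0 < C := Finset.sum_pos (fun i _ => hc i) Finset.univ_nonempty
  set M : ℝ := ‖g‖ with hMdef
  have hM : 0 ≤ M := norm_nonneg _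
  set L : ℝ := ∑ i, c i ^ α * g (ω i) with hLdef
  have hCsum : 0 < ∑ i, c i ^ α :=
    Finset.sum_pos (fun i _ => Real.rpow_pos_of_pos (hc i) α) Finset.univ_nonempty
  have hFb : ∀ x : ℝ, 0 < (ρ (Ioi x)).toReal := tail_pos ρ α hRV
  have hpow : ∀ i, ((1/c i : ℝ)) ^ (-α) = c i ^ α := by
    intro i
    rw [one_div, Real.inv_rpow (hc i).le, Real.rpow_neg (hc i).le, inv_inv]
  have hgi : Integrable (fun z => g (Θ z)) μ := by
    refine ⟨(g.continuous.measurable.comp hΘ).aestronglyMeasurable, ?_⟩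
    exact HasFiniteIntegral.of_bounded (C := M) (ae_of_all _ fun z => g.norm_coe_le_norm _)
  have hSmeas : Measurable (fun z : Fin m → ℝ => ∑ i, c i * z i) :=
    Finset.measurable_sum _ (fun i _ => (measurable_pi_apply i).const_mul _)
  rw [Metric.tendsto_nhds]
  intro ε hε
  set ε' : ℝ := ε / (3 * (∑ i, c i ^ α) + 3) with hε'def
  have hε'pos : 0 < ε' := by positivity
  -- radius of continuity
  have hrad : ∀ i, ∃ ri, 0 < ri ∧ ∀ x, dist x (ω i) < ri → |g x - g (ω i)| < ε' := by
    intro i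
    obtain ⟨ri, hri, h⟩ := Metric.continuousAt_iff.1 (g.continuous.continuousAt (x := ω i)) ε' hε'pos
    exact ⟨ri, hri, fun x hx => by have := h hx; rwa [Real.dist_eq] at this⟩
  choose rr hrrpos hrr using hrad
  set r : ℝ := Finset.univ.inf' Finset.univ_nonempty rr with hrdef
  have hrpos : 0 < r := by
    rw [hrdef, Finset.lt_inf'_iff]
    exact fun i _ => hrrpos i
  -- choice of δ
  obtain ⟨δ, hδpos, hδ1, hδ2, hδ3, hδ4⟩ :
      ∃ δ : ℝ, 0 < δ ∧ (∀ i, δ * c i ≤ 1) ∧ C * δ < 1 ∧ C * δ < r ∧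
        M * (∑ i, (((1 - C*δ)/c i) ^ (-α) - (1/c i) ^ (-α))) < ε/3 := by
    have e0 : ∀ᶠ δ in 𝓝[>] (0:ℝ), 0 < δ := eventually_mem_nhdsWithin
    have e1 : ∀ᶠ δ in 𝓝[>] (0:ℝ), ∀ i, δ * c i ≤ 1 := by
      rw [Filter.eventually_all]
      intro i
      apply Filter.Eventually.filter_mono nhdsWithin_le_nhds
      filter_upwards [Iio_mem_nhds (one_div_pos.2 (hc i))] with δ hδ
      rw [Set.mem_Iio, lt_div_iff₀ (hc i)] at hδ
      linarith
    have hCmul : Tendsto (fun δ : ℝ => C * δ) (𝓝[>] 0) (𝓝 0) := by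
      have h : Tendsto (fun δ : ℝ => C * δ) (𝓝 0) (𝓝 (C * 0)) := tendsto_id.const_mul C
      rw [mul_zero] at h
      exact h.mono_left nhdsWithin_le_nhds
    have e2 : ∀ᶠ δ in 𝓝[>] (0:ℝ), C * δ < 1 := hCmul.eventually (eventually_lt_nhds one_pos)
    have e3 : ∀ᶠ δ in 𝓝[>] (0:ℝ), C * δ < r := hCmul.eventually (eventually_lt_nhds hrpos)
    have h4cont : Tendsto (fun δ : ℝ =>
        M * (∑ i, (((1 - C*δ)/c i) ^ (-α) - (1/c i) ^ (-α)))) (𝓝[>] 0) (𝓝 0) := by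
      have hterm : ∀ i : Fin m, Tendsto (fun δ : ℝ => ((1 - C*δ)/c i : ℝ) ^ (-α))
          (𝓝 0) (𝓝 ((1/c i : ℝ) ^ (-α))) := by
        intro i
        have hbase : Tendsto (fun δ : ℝ => (1 - C*δ)/c i) (𝓝 0) (𝓝 (1/c i)) := by
          have hcont : Continuous fun δ : ℝ => (1 - C*δ)/c i := by continuity
          have := hcont.tendsto 0
          simpa using this
        exact (Real.continuousAt_rpow_const _ (-α) (Or.inl (ne_of_gt (one_div_pos.2 (hc i))))).tendsto.comp hbase
      have hsum : Tendsto (fun δ : ℝ => M * (∑ i, (((1 - C*δ)/c i) ^ (-α) - (1/c i) ^ (-α))))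
          (𝓝 0) (𝓝 (M * (∑ i : Fin m, (((1/c i : ℝ)) ^ (-α) - (1/c i) ^ (-α))))) :=
        (tendsto_finset_sum _ (fun i _ => (hterm i).sub tendsto_const_nhds)).const_mul M
      simp only [sub_self, Finset.sum_const_zero, mul_zero] at hsum
      exact hsum.mono_left nhdsWithin_le_nhds
    have e4 : ∀ᶠ δ in 𝓝[>] (0:ℝ),
        M * (∑ i, (((1 - C*δ)/c i) ^ (-α) - (1/c i) ^ (-α))) < ε/3 :=
      h4cont.eventually (eventually_lt_nhds (by positivity))
    obtain ⟨δ, h0, h1, h2, h3, h4⟩ := (e0.and (e1.and (e2.and (e3.and e4)))).exists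
    exact ⟨δ, h0, h1, h2, h3, h4⟩
  -- functions of τ
  set F : ℝ → ℝ := fun τ => (ρ (Ioi τ)).toReal with hFdef
  set E : ℝ → Fin m → Set (Fin m → ℝ) :=
    fun τ i => {z | ∀ k, z k ∈ if k = i then Ioi ((1/c i)*τ) else Icc 0 (δ*τ)} with hEdef
  set NN : ℝ → ℝ :=
    fun τ => ∫ z in {z : Fin m → ℝ | τ < ∑ i, c i * z i}, g (Θ z) ∂μ with hNNdef
  set PP : ℝ → ℝ := fun τ => (∑ i, g (ω i) * (μ (E τ i)).toReal) / F τ with hPPdef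
  set BB : ℝ → ℝ := fun τ => (m*m : ℝ) * (ρ (Ioi (δ*τ))).toReal^2 / F τ with hBBdef
  set CC : ℝ → ℝ := fun τ =>
    (∑ i, ((ρ (Ioi (((1-C*δ)/c i)*τ))).toReal - (ρ (Ioi ((1/c i)*τ))).toReal)) / F τ with hCCdef
  set RR : ℝ → ℝ :=
    fun τ => ε' * (∑ i, (μ (E τ i)).toReal / F τ) + M * (BB τ + CC τ) + dist (PP τ) L with hRRdef
  -- measure of E
  have hEm : ∀ τ i, (μ (E τ i)).toReal
      = (ρ (Ioi ((1/c i)*τ))).toReal * (ρ (Icc 0 (δ*τ))).toReal^(m-1) := by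
    intro τ i
    rw [hEdef, hμdef]
    rw [colMeasure ρ i _ _, ENNReal.toReal_mul, ENNReal.toReal_pow]
  -- limits
  have heR : ∀ i, Tendsto (fun τ => (μ (E τ i)).toReal / F τ) atTop (𝓝 (c i ^ α)) := by
    intro i
    have hgoal : (fun τ => (μ (E τ i)).toReal / F τ)
        = fun τ => ((ρ (Ioi ((1/c i)*τ))).toReal / (ρ (Ioi τ)).toReal)
            * (ρ (Icc 0 (δ*τ))).toReal^(m-1) := by
      funext τ; rw [hEm τ i, hFdef, mul_div_right_comm]
    rw [hgoal]
    have hval : ((1/c i : ℝ))^(-α) * (1:ℝ)^(m-1) = c i ^ α := by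
      rw [one_pow, mul_one, hpow i]
    rw [← hval]
    exact (hRV (1/c i) (one_div_pos.2 (hc i))).mul ((Icc_tendsto_one ρ hρ0 hδpos).pow (m-1))
  have hBBlim : Tendsto BB atTop (𝓝 0) := by
    have hgoal : BB = fun τ => (m*m : ℝ) *
        (((ρ (Ioi (δ*τ))).toReal / (ρ (Ioi τ)).toReal) * (ρ (Ioi (δ*τ))).toReal) := by
      funext τ; rw [hBBdef, hFdef]; ring
    rw [hgoal]
    have h2 : Tendsto (fun τ : ℝ => (ρ (Ioi (δ*τ))).toReal) atTop (𝓝 0) := by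
      have := (tail_tendsto_zero ρ).comp (Tendsto.const_mul_atTop hδpos tendsto_id)
      exact this
    have := ((hRV δ hδpos).mul h2).const_mul (m*m : ℝ)
    simpa using this
  have hCClim : Tendsto CC atTop (𝓝 (∑ i, (((1 - C*δ)/c i) ^ (-α) - (1/c i) ^ (-α)))) := by
    have hgoal : CC = fun τ => ∑ i, ((ρ (Ioi (((1-C*δ)/c i)*τ))).toReal / (ρ (Ioi τ)).toReal
        - (ρ (Ioi ((1/c i)*τ))).toReal / (ρ (Ioi τ)).toReal) := by
      funext τ; rw [hCCdef, hFdef]; dsimp only; rw [Finset.sum_div]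
      exact Finset.sum_congr rfl fun i _ => sub_div _ _ _
    rw [hgoal]
    refine tendsto_finset_sum _ fun i _ => Tendsto.sub ?_ ?_
    · have hb : (0:ℝ) < (1-C*δ)/c i := by
        apply div_pos _ (hc i); linarith
      exact hRV _ hb
    · exact hRV _ (one_div_pos.2 (hc i))
  have hPPlim : Tendsto PP atTop (𝓝 L) := by
    have hgoal : PP = fun τ => ∑ i, g (ω i) * ((μ (E τ i)).toReal / F τ) := by
      funext τ; rw [hPPdef]; dsimp only; rw [Finset.sum_div]
      exact Finset.sum_congr rfl fun i _ => mul_div_assoc _ _ _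
    rw [hgoal]
    have hL' : L = ∑ i, g (ω i) * c i ^ α := by
      rw [hLdef]; exact Finset.sum_congr rfl fun i _ => mul_comm _ _
    rw [hL']
    exact tendsto_finset_sum _ fun i _ => (heR i).const_mul _
  have hRRlim : Tendsto RR atTop
      (𝓝 (ε' * (∑ i, c i ^ α) + M * (0 + ∑ i, (((1 - C*δ)/c i) ^ (-α) - (1/c i) ^ (-α))) + 0)) := by
    rw [hRRdef]
    refine Tendsto.add (Tendsto.add ?_ ?_) ?_
    · exact (tendsto_finset_sum _ (fun i _ => heR i)).const_mul _
    · exact (hBBlim.add hCClim).const_mul _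
    · have := hPPlim.dist (tendsto_const_nhds (x := L) (f := atTop))
      simpa using this
  have hlt : ε' * (∑ i, c i ^ α) + M * (0 + ∑ i, (((1 - C*δ)/c i) ^ (-α) - (1/c i) ^ (-α))) + 0 < ε := by
    have h1 : ε' * (∑ i, c i ^ α) < ε/3 := by
      rw [hε'def]
      rw [div_mul_eq_mul_div, div_lt_div_iff₀ (by positivity) (by norm_num)]
      nlinarith [hCsum, hε]
    nlinarith [hδ4]
  have hev2 : ∀ᶠ τ in atTop, RR τ < ε := hRRlim.eventually (eventually_lt_nhds hlt)
  have hmain : ∀ᶠ τ in atTop, dist (NN τ / F τ) L ≤ RR τ := by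
    filter_upwards [eventually_gt_atTop 0] with τ hτ
    have hFτ : 0 < F τ := hFb τ
    set T : Set (Fin m → ℝ) := {z | τ < ∑ i, c i * z i} with hTdef
    have hTmeas : MeasurableSet T := hSmeas measurableSet_Ioi
    have hEmeas : ∀ i, MeasurableSet (E τ i) := by
      intro i
      have hpi : E τ i
          = Set.pi Set.univ (fun k => if k = i then Ioi ((1/c i)*τ) else Icc 0 (δ*τ)) := by
        rw [hEdef]; ext z; simp [Set.mem_pi]
      rw [hpi]
      refine MeasurableSet.univ_pi fun k => ?_
      split
      · exact measurableSet_Ioi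
      · exact measurableSet_Icc
    have hEfacts : ∀ i z, z ∈ E τ i →
        (∀ k, 0 ≤ z k) ∧ (1/c i)*τ < z i ∧ (∀ k, k ≠ i → z k ≤ δ*τ) := by
      intro i z hz
      rw [hEdef] at hz
      have hzi : (1/c i)*τ < z i := by have h := hz i; rwa [if_pos rfl] at h
      have hzk : ∀ k, k ≠ i → z k ∈ Icc 0 (δ*τ) := fun k hk => by
        have h := hz k; rwa [if_neg hk] at h
      refine ⟨fun k => ?_, hzi, fun k hk => (hzk k hk).2⟩
      by_cases hk : k = i
      · subst hk
        have h0 : (0:ℝ) < (1/c k)*τ := mul_pos (one_div_pos.2 (hc k)) hτ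
        linarith
      · exact (hzk k hk).1
    have hEsub : ∀ i, E τ i ⊆ T := by
      intro i z hz
      obtain ⟨hz0, hzi, -⟩ := hEfacts i z hz
      have h1 : c i * ((1/c i)*τ) = τ := by rw [one_div, ← mul_assoc, mul_inv_cancel₀ (hc i).ne', one_mul]
      have h2 : c i * ((1/c i)*τ) < c i * z i := mul_lt_mul_of_pos_left hzi (hc i)
      have h3 : c i * z i ≤ ∑ k, c k * z k :=
        Finset.single_le_sum (f := fun k => c k * z k)
          (fun k _ => mul_nonneg (hc k).le (hz0 k)) (Finset.mem_univ i)
      show τ < ∑ k, c k * z k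
      linarith
    have hEdisj : Set.Pairwise ↑(Finset.univ : Finset (Fin m)) (Function.onFun Disjoint (E τ)) := by
      intro i _ i' _ hii'
      rw [Function.onFun, Set.disjoint_left]
      intro z hz hz'
      obtain ⟨-, hzi, -⟩ := hEfacts i z hz
      obtain ⟨-, -, hzk'⟩ := hEfacts i' z hz'
      have h1 : z i ≤ δ*τ := hzk' i hii'
      have hδc : δ ≤ 1/c i := (le_div_iff₀ (hc i)).2 (hδ1 i)
      have h2 : δ*τ ≤ (1/c i)*τ := mul_le_mul_of_nonneg_right hδc hτ.le
      linarith
    have hUsub : (⋃ i ∈ Finset.univ, E τ i) ⊆ T := by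
      intro z hz
      simp only [Finset.mem_univ, Set.iUnion_true, Set.mem_iUnion] at hz
      obtain ⟨i, hzi⟩ := hz
      exact hEsub i hzi
    have hUmeas : MeasurableSet (⋃ i ∈ Finset.univ, E τ i) :=
      (Finset.univ : Finset (Fin m)).measurableSet_biUnion (fun i _ => hEmeas i)
    have hsplit : NN τ = (∑ i, ∫ z in E τ i, g (Θ z) ∂μ)
        + ∫ z in T \ (⋃ i ∈ Finset.univ, E τ i), g (Θ z) ∂μ := by
      have h0 : NN τ
          = ∫ z in (⋃ i ∈ Finset.univ, E τ i) ∪ (T \ ⋃ i ∈ Finset.univ, E τ i), g (Θ z) ∂μ := by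
        rw [hNNdef]; dsimp only; rw [← hTdef, Set.union_diff_cancel hUsub]
      rw [h0, setIntegral_union disjoint_sdiff_self_right (hTmeas.diff hUmeas)
        hgi.integrableOn hgi.integrableOn,
        integral_biUnion_finset Finset.univ (fun i _ => hEmeas i) hEdisj
          (fun i _ => hgi.integrableOn)]
    have hperE : ∀ i, |(∫ z in E τ i, g (Θ z) ∂μ) - g (ω i) * (μ (E τ i)).toReal|
        ≤ ε' * (μ (E τ i)).toReal := by
      intro i
      have hsub2 : (∫ z in E τ i, g (Θ z) ∂μ) - g (ω i) * (μ (E τ i)).toReal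
          = ∫ z in E τ i, (g (Θ z) - g (ω i)) ∂μ := by
        rw [integral_sub hgi.integrableOn (integrableOn_const (measure_ne_top μ _)),
          setIntegral_const, smul_eq_mul, mul_comm, measureReal_def]
      have hmeas' : AEStronglyMeasurable (fun z => g (Θ z) - g (ω i)) (μ.restrict (E τ i)) :=
        (((g.continuous.measurable.comp hΘ).sub measurable_const).aestronglyMeasurable).restrict
      have hr_le : r ≤ rr i := Finset.inf'_le rr (Finset.mem_univ i)
      have hptwise : ∀ z ∈ E τ i, ‖g (Θ z) - g (ω i)‖ ≤ ε' := by
        intro z hz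
        obtain ⟨hz0, hzi, hzk⟩ := hEfacts i z hz
        have hdist : dist (Θ z) (ω i) ≤ C * δ := hΘclose δ τ hδpos hτ i z hz0 hzi hzk
        have hlt2 : dist (Θ z) (ω i) < rr i := lt_of_le_of_lt hdist (lt_of_lt_of_le hδ3 hr_le)
        rw [Real.norm_eq_abs]
        exact (hrr i _ hlt2).le
      rw [hsub2]
      have hb := norm_setIntegral_le_of_norm_le_const (μ := μ) (s := E τ i) (C := ε')
        (measure_lt_top μ _) hptwise
      simpa [Real.norm_eq_abs, measureReal_def] using hb
    -- rest of T: bad sets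
    set W : Fin m × Fin m → Set (Fin m → ℝ) :=
      fun p => if p.1 = p.2 then ∅ else {z | δ*τ < z p.1 ∧ δ*τ < z p.2} with hWdef
    set Bs : Fin m → Set (Fin m → ℝ) :=
      fun i => {z | z i ∈ Ioc (((1-C*δ)/c i)*τ) ((1/c i)*τ)} with hBsdef
    have hsub : T \ (⋃ i ∈ Finset.univ, E τ i)
        ⊆ (⋃ p, W p) ∪ ((⋃ i, Bs i) ∪ {z | ¬ ∀ k, 0 ≤ z k}) := by
      rintro z ⟨hzT, hzE⟩
      by_cases hz0 : ∀ k, 0 ≤ z k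
      swap
      · exact Or.inr (Or.inr hz0)
      by_cases h2big : ∃ p : Fin m × Fin m, p.1 ≠ p.2 ∧ δ*τ < z p.1 ∧ δ*τ < z p.2
      · obtain ⟨p, hp, hp1, hp2⟩ := h2big
        refine Or.inl (Set.mem_iUnion.2 ⟨p, ?_⟩)
        rw [hWdef]; dsimp only; rw [if_neg hp]; exact ⟨hp1, hp2⟩
      · push_neg at h2big
        have hzT' : τ < ∑ k, c k * z k := hzT
        have hbig : ∃ i, δ*τ < z i := by
          by_contra hall
          push_neg at hall
          have hle : ∑ k, c k * z k ≤ ∑ k, c k * (δ*τ) :=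
            Finset.sum_le_sum fun k _ => mul_le_mul_of_nonneg_left (hall k) (hc k).le
          rw [← Finset.sum_mul] at hle
          rw [← hCdef] at hle
          nlinarith [hδ2, hτ]
        obtain ⟨i, hi⟩ := hbig
        have hsmall : ∀ k, k ≠ i → z k ≤ δ*τ := by
          intro k hk
          by_contra hk'
          push_neg at hk'
          have h := h2big (k, i) hk hk'
          exact absurd hi (not_lt.2 h)
        have hupper : z i ≤ (1/c i)*τ := by
          by_contra hup
          push_neg at hup
          apply hzE
          simp only [Finset.mem_univ, Set.iUnion_true, Set.mem_iUnion]
          refine ⟨i, ?_⟩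
          rw [hEdef]
          intro k
          by_cases hk : k = i
          · subst hk; rw [if_pos rfl]; exact hup
          · rw [if_neg hk]; exact ⟨hz0 k, hsmall k hk⟩
        have hlower : ((1-C*δ)/c i)*τ < z i := by
          have hS : ∑ k, c k * z k = c i * z i + ∑ k ∈ Finset.univ.erase i, c k * z k :=
            (Finset.add_sum_erase _ _ (Finset.mem_univ i)).symm
          have hrestb : ∑ k ∈ Finset.univ.erase i, c k * z k
              ≤ ∑ k ∈ Finset.univ.erase i, c k * (δ*τ) :=
            Finset.sum_le_sum fun k hk =>
              mul_le_mul_of_nonneg_left (hsmall k (Finset.ne_of_mem_erase hk)) (hc k).le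
          have hCb : ∑ k ∈ Finset.univ.erase i, c k * (δ*τ) ≤ C * (δ*τ) := by
            rw [← Finset.sum_mul, hCdef]
            apply mul_le_mul_of_nonneg_right _ (by positivity)
            exact Finset.sum_le_sum_of_subset_of_nonneg (Finset.subset_univ _)
              (fun k _ _ => (hc k).le)
          have hkey : (1-C*δ)*τ < c i * z i := by
            rw [hS] at hzT'
            nlinarith [hrestb, hCb]
          rw [div_mul_eq_mul_div, div_lt_iff₀ (hc i)]
          nlinarith [hkey]
        refine Or.inr (Or.inl (Set.mem_iUnion.2 ⟨i, ?_⟩))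
        rw [hBsdef]
        exact ⟨hlower, hupper⟩
    have hWm : ∀ p : Fin m × Fin m, μ (W p) ≤ ρ (Ioi (δ*τ)) * ρ (Ioi (δ*τ)) := by
      intro p
      by_cases hp : p.1 = p.2
      · rw [hWdef]; dsimp only; rw [if_pos hp]; simp
      · rw [hWdef]; dsimp only; rw [if_neg hp]
        exact le_of_eq (twoCoord ρ p.1 p.2 hp (δ*τ))
    have hBm : ∀ i, μ (Bs i) = ρ (Ioc (((1-C*δ)/c i)*τ) ((1/c i)*τ)) := by
      intro i
      rw [hBsdef]
      exact oneCoord ρ i _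
    have horth : μ {z : Fin m → ℝ | ¬ ∀ k, 0 ≤ z k} = 0 := orthant_ae ρ hρ0
    have hμrest : μ (T \ ⋃ i ∈ Finset.univ, E τ i)
        ≤ (∑ p : Fin m × Fin m, ρ (Ioi (δ*τ)) * ρ (Ioi (δ*τ)))
          + ∑ i, ρ (Ioc (((1-C*δ)/c i)*τ) ((1/c i)*τ)) := by
      refine le_trans (measure_mono hsub) (le_trans (measure_union_le _ _) ?_)
      refine add_le_add ?_ ?_
      · refine le_trans (measure_iUnion_le _) ?_
        rw [tsum_fintype]
        exact Finset.sum_le_sum fun p _ => hWm p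
      · refine le_trans (measure_union_le _ _) ?_
        rw [horth, add_zero]
        refine le_trans (measure_iUnion_le _) ?_
        rw [tsum_fintype]
        exact le_of_eq (Finset.sum_congr rfl fun i _ => hBm i)
    have hfin : (∑ p : Fin m × Fin m, ρ (Ioi (δ*τ)) * ρ (Ioi (δ*τ)))
        + ∑ i, ρ (Ioc (((1-C*δ)/c i)*τ) ((1/c i)*τ)) ≠ ⊤ := by
      apply ENNReal.add_ne_top.2
      constructor
      · exact ENNReal.sum_ne_top.2 fun p _ =>
          ENNReal.mul_ne_top (measure_ne_top _ _) (measure_ne_top _ _)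
      · exact ENNReal.sum_ne_top.2 fun i _ => measure_ne_top _ _
    have hineq : ∀ i : Fin m, ((1-C*δ)/c i)*τ ≤ (1/c i)*τ := by
      intro i
      have h1 : (1-C*δ) ≤ 1 := by nlinarith [mul_nonneg hCpos.le hδpos.le]
      exact mul_le_mul_of_nonneg_right ((div_le_div_iff_of_pos_right (hc i)).2 h1) hτ.le
    have hrest : (μ (T \ ⋃ i ∈ Finset.univ, E τ i)).toReal
        ≤ (m*m : ℝ) * (ρ (Ioi (δ*τ))).toReal^2
          + ∑ i, ((ρ (Ioi (((1-C*δ)/c i)*τ))).toReal - (ρ (Ioi ((1/c i)*τ))).toReal) := by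
      refine le_trans (ENNReal.toReal_mono hfin hμrest) ?_
      have hA1 : (∑ p : Fin m × Fin m, ρ (Ioi (δ*τ)) * ρ (Ioi (δ*τ))) ≠ ⊤ :=
        ENNReal.sum_ne_top.2 fun p _ =>
          ENNReal.mul_ne_top (measure_ne_top _ _) (measure_ne_top _ _)
      have hA2 : (∑ i, ρ (Ioc (((1-C*δ)/c i)*τ) ((1/c i)*τ))) ≠ ⊤ :=
        ENNReal.sum_ne_top.2 fun i _ => measure_ne_top _ _
      rw [ENNReal.toReal_add hA1 hA2]
      have h1 : (∑ p : Fin m × Fin m, ρ (Ioi (δ*τ)) * ρ (Ioi (δ*τ))).toReal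
          = (m*m : ℝ) * (ρ (Ioi (δ*τ))).toReal^2 := by
        rw [ENNReal.toReal_sum (fun p _ =>
          ENNReal.mul_ne_top (measure_ne_top _ _) (measure_ne_top _ _))]
        rw [Finset.sum_const, Finset.card_univ]
        simp [ENNReal.toReal_mul, pow_two, Fintype.card_prod, Fintype.card_fin]
      have h2 : (∑ i, ρ (Ioc (((1-C*δ)/c i)*τ) ((1/c i)*τ))).toReal
          = ∑ i, ((ρ (Ioi (((1-C*δ)/c i)*τ))).toReal - (ρ (Ioi ((1/c i)*τ))).toReal) := by
        rw [ENNReal.toReal_sum (fun i _ => measure_ne_top _ _)]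
        exact Finset.sum_congr rfl fun i _ => Ioc_toReal ρ _ _ (hineq i)
      rw [h1, h2]
    have hrestint : |∫ z in T \ (⋃ i ∈ Finset.univ, E τ i), g (Θ z) ∂μ|
        ≤ M * (μ (T \ ⋃ i ∈ Finset.univ, E τ i)).toReal := by
      have hb := norm_setIntegral_le_of_norm_le_const (μ := μ)
        (s := T \ ⋃ i ∈ Finset.univ, E τ i) (C := M) (measure_lt_top μ _)
        (fun z _ => g.norm_coe_le_norm (Θ z))
      simpa [Real.norm_eq_abs, measureReal_def] using hb
    have hNbound : |NN τ - ∑ i, g (ω i) * (μ (E τ i)).toReal|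
        ≤ ε' * (∑ i, (μ (E τ i)).toReal)
          + M * ((m*m : ℝ) * (ρ (Ioi (δ*τ))).toReal^2
            + ∑ i, ((ρ (Ioi (((1-C*δ)/c i)*τ))).toReal - (ρ (Ioi ((1/c i)*τ))).toReal)) := by
      rw [hsplit]
      have h1 : |(∑ i, ∫ z in E τ i, g (Θ z) ∂μ) - ∑ i, g (ω i) * (μ (E τ i)).toReal|
          ≤ ε' * ∑ i, (μ (E τ i)).toReal := by
        rw [← Finset.sum_sub_distrib, Finset.mul_sum]
        exact le_trans (Finset.abs_sum_le_sum_abs _ _) (Finset.sum_le_sum fun i _ => hperE i)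
      have h2 : |∫ z in T \ (⋃ i ∈ Finset.univ, E τ i), g (Θ z) ∂μ|
          ≤ M * ((m*m : ℝ) * (ρ (Ioi (δ*τ))).toReal^2
            + ∑ i, ((ρ (Ioi (((1-C*δ)/c i)*τ))).toReal - (ρ (Ioi ((1/c i)*τ))).toReal)) :=
        le_trans hrestint (mul_le_mul_of_nonneg_left hrest hM)
      have hre : (∑ i, ∫ z in E τ i, g (Θ z) ∂μ)
            + (∫ z in T \ (⋃ i ∈ Finset.univ, E τ i), g (Θ z) ∂μ)
            - ∑ i, g (ω i) * (μ (E τ i)).toReal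
          = ((∑ i, ∫ z in E τ i, g (Θ z) ∂μ) - ∑ i, g (ω i) * (μ (E τ i)).toReal)
            + ∫ z in T \ (⋃ i ∈ Finset.univ, E τ i), g (Θ z) ∂μ := by ring
      rw [hre]
      exact le_trans (abs_add_le _ _) (add_le_add h1 h2)
    have hQP : dist (NN τ / F τ) (PP τ)
        ≤ ε' * (∑ i, (μ (E τ i)).toReal / F τ) + M * (BB τ + CC τ) := by
      rw [Real.dist_eq, hPPdef]
      dsimp only
      rw [div_sub_div_same, abs_div, abs_of_pos hFτ]
      calc |NN τ - ∑ i, g (ω i) * (μ (E τ i)).toReal| / F τ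
          ≤ (ε' * (∑ i, (μ (E τ i)).toReal)
            + M * ((m*m : ℝ) * (ρ (Ioi (δ*τ))).toReal^2
              + ∑ i, ((ρ (Ioi (((1-C*δ)/c i)*τ))).toReal
                - (ρ (Ioi ((1/c i)*τ))).toReal))) / F τ := by
            gcongr
        _ = ε' * (∑ i, (μ (E τ i)).toReal / F τ) + M * (BB τ + CC τ) := by
            rw [hBBdef, hCCdef]
            dsimp only
            rw [← Finset.sum_div]
            ring
    have htri := dist_triangle (NN τ / F τ) (PP τ) L
    rw [hRRdef]
    dsimp only
    linarith [hQP, htri]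
  filter_upwards [hmain, hev2] with τ h1 h2
  exact lt_of_le_of_lt h1 h2


end SpecAux

open SpecAux Set

/-- Limit law (Lemma 2.1): if `Z` has i.i.d. nonnegative components whose
common law `ρ` has a regularly varying tail with index `-α`, and
`A ∈ ℝ₊^{d×m}` has all column ℓ1-norms positive, then for `X = AZ` the
conditional law of `X/‖X‖₁` given `‖X‖₁ > τ` converges weakly as `τ → ∞` to
`K_A = Σᵢ (‖A_{·i}‖₁^α / Σⱼ ‖A_{·j}‖₁^α) δ_{A_{·i}/‖A_{·i}‖₁}`. -/
theorem linear_model_spectral_limit (d m : ℕ) (α : ℝ) (hα : 0 < α)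
    (ρ : Measure ℝ) [IsProbabilityMeasure ρ] (hρ_nonneg : ρ (Set.Iio 0) = 0)
    (hRV : ∀ t : ℝ, 0 < t →
      Tendsto (fun x : ℝ => (ρ (Set.Ioi (t * x))).toReal / (ρ (Set.Ioi x)).toReal)
        atTop (𝓝 (t ^ (-α))))
    (A : Matrix (Fin d) (Fin m) ℝ) (hA : ∀ i j, 0 ≤ A i j)
    (hcol : ∀ i, 0 < ∑ j, A j i)
    (f : BoundedContinuousFunction (Fin d → ℝ) ℝ) :
    Tendsto (fun τ : ℝ => ∫ x, f x ∂(condAngularL1 d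
        ((Measure.pi fun _ : Fin m => ρ).map A.mulVec) τ))
      atTop
      (𝓝 (∑ i, ((∑ j, A j i) ^ α / ∑ i', (∑ j, A j i') ^ α) *
        f (fun j => A j i / ∑ j', A j' i))) := by
  rcases Nat.eq_zero_or_pos m with hm0 | hm
  · subst hm0
    simp only [Finset.univ_eq_empty, Finset.sum_empty]
    have hev : (fun _ : ℝ => (0:ℝ)) =ᶠ[atTop] (fun τ : ℝ => ∫ x, f x ∂(condAngularL1 d
        ((Measure.pi fun _ : Fin 0 => ρ).map A.mulVec) τ)) := by
      filter_upwards [eventually_ge_atTop 0] with τ hτ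
      rw [cond_integral_eq ρ hρ_nonneg A hA f τ]
      have hempty : {z : Fin 0 → ℝ | τ < ∑ i : Fin 0, (∑ j, A j i) * z i} = ∅ := by
        ext z
        simp only [Finset.univ_eq_empty, Finset.sum_empty, Set.mem_setOf_eq,
          Set.mem_empty_iff_false, iff_false, not_lt]
        exact hτ
      rw [hempty]
      simp
    exact Tendsto.congr' hev tendsto_const_nhds
  · have hΘmeas : Measurable (fun z : Fin m → ℝ => (∑ i, (∑ j, A j i) * z i)⁻¹ • A.mulVec z) :=
      ((Finset.measurable_sum _ fun i _ =>
        (measurable_pi_apply i).const_mul _).inv).smul (measurable_mulVec A)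
    have hkey := key α hα ρ hρ_nonneg hRV hm (fun i => ∑ j, A j i) hcol
      (fun i => fun j => A j i / ∑ j', A j' i)
      (fun z => (∑ i, (∑ j, A j i) * z i)⁻¹ • A.mulVec z) hΘmeas
      (theta_close A hA hcol) f
    have hkey1 := key α hα ρ hρ_nonneg hRV hm (fun i => ∑ j, A j i) hcol
      (fun i => fun j => A j i / ∑ j', A j' i)
      (fun z => (∑ i, (∑ j, A j i) * z i)⁻¹ • A.mulVec z) hΘmeas
      (theta_close A hA hcol) (BoundedContinuousFunction.const _ (1:ℝ))
    have hD : Tendsto (fun τ : ℝ =>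
        ((Measure.pi fun _ : Fin m => ρ) {z | τ < ∑ i, (∑ j, A j i) * z i}).toReal
          / (ρ (Set.Ioi τ)).toReal) atTop (𝓝 (∑ i, (∑ j, A j i) ^ α)) := by
      have h2 := hkey1.congr (f₂ := fun τ : ℝ =>
        ((Measure.pi fun _ : Fin m => ρ) {z | τ < ∑ i, (∑ j, A j i) * z i}).toReal
          / (ρ (Set.Ioi τ)).toReal) (fun τ => by
        congr 1
        simp only [BoundedContinuousFunction.const_apply]
        rw [setIntegral_const, smul_eq_mul, mul_one, measureReal_def])
      simpa using h2
    have hCsum : 0 < ∑ i, (∑ j, A j i) ^ α := by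
      have : Nonempty (Fin m) := ⟨⟨0, hm⟩⟩
      exact Finset.sum_pos (fun i _ => Real.rpow_pos_of_pos (hcol i) α) Finset.univ_nonempty
    have hfin := (hD.inv₀ hCsum.ne').mul hkey
    have hval : (∑ i, (∑ j, A j i)^α)⁻¹
          * (∑ i, (∑ j, A j i) ^ α * f (fun j => A j i / ∑ j', A j' i))
        = ∑ i, ((∑ j, A j i) ^ α / ∑ i', (∑ j, A j i') ^ α) *
            f (fun j => A j i / ∑ j', A j' i) := by
      rw [Finset.mul_sum]
      exact Finset.sum_congr rfl fun i _ => by rw [div_eq_inv_mul]; ring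
    rw [← hval]
    refine hfin.congr fun τ => ?_
    rw [cond_integral_eq ρ hρ_nonneg A hA f τ]
    have hF : (ρ (Set.Ioi τ)).toReal ≠ 0 := (tail_pos ρ α hRV τ).ne'
    set a := ((Measure.pi fun _ : Fin m => ρ) {z | τ < ∑ i, (∑ j, A j i) * z i}).toReal with ha
    set b := ∫ z in {z : Fin m → ℝ | τ < ∑ i, (∑ j, A j i) * z i},
        f ((∑ i, (∑ j, A j i) * z i)⁻¹ • A.mulVec z) ∂(Measure.pi fun _ : Fin m => ρ) with hb
    set Fv := (ρ (Set.Ioi τ)).toReal with hFv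
    show (a / Fv)⁻¹ * (b / Fv) = a⁻¹ * b
    rcases eq_or_ne a 0 with h0 | h0
    · simp [h0]
    · field_simp
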